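/- For any positive integer k, with p = ⌊(k-1)/2⌋ and the convention C(k,-1) = 0, the sum ∑_{j=0}^{p} (k-2j)·(C(k,j+1) - C(k,j-1)) equals 2^{k+1} - k - 2. -/

import Mathlib

open Finset

/-- Key identity: `k * C(k-1, i) = (i+1) * C(k, i+1)` in `ℤ`. -/
lemma pgm_key (K i : ℕ) :
    ((K : ℤ) + 1) * ((K.choose i : ℤ)) = ((i : ℤ) + 1) * ((K + 1).choose (i + 1) : ℤ) := by
  have h := Nat.add_one_mul_choose_eq K i
  have := congrArg (Nat.cast : ℕ → ℤ) h
  push_cast at this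
  linarith

/-- Pascal in `ℤ`. -/
lemma pgm_pascal (K i : ℕ) :
    (((K + 1).choose (i + 1) : ℤ)) = (K.choose i : ℤ) + (K.choose (i + 1) : ℤ) := by
  exact_mod_cast congrArg (Nat.cast : ℕ → ℤ) (Nat.choose_succ_succ K i)

/-- Partial sum closed form. -/
lemma pgm_partial (k : ℕ) (hk : 1 ≤ k) (m : ℕ) :
    ∑ j ∈ Finset.range (m + 1),
        ((k : ℤ) - 2 * (j : ℤ)) *
          ((k.choose (j + 1) : ℤ) - (if j = 0 then 0 else (k.choose (j - 1) : ℤ)))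
      = (k : ℤ) * (((k - 1).choose (m + 1) : ℤ)
            - (if m = 0 then 0 else ((k - 1).choose (m - 1) : ℤ)))
        + 2 * ((∑ i ∈ Finset.range (m + 2), (k.choose i : ℤ))
            + (if m = 0 then 0 else ∑ i ∈ Finset.range m, (k.choose i : ℤ)))
        - (k : ℤ) - 2 := by
  obtain ⟨K, rfl⟩ : ∃ K, k = K + 1 := ⟨k - 1, (Nat.succ_pred_eq_of_pos hk).symm⟩
  simp only [Nat.add_sub_cancel]
  induction m with
  | zero =>
      simp [Finset.sum_range_succ, Nat.choose_one_right]
      ring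
  | succ m ih =>
      rw [Finset.sum_range_succ, ih]
      simp only [Nat.succ_ne_zero, if_false, Nat.add_sub_cancel]
      rcases m with _ | m
      · -- second term is j = 1
        simp only [if_pos rfl, Nat.zero_add]
        rw [show (0:ℕ)+1+2 = 3 by rfl, Finset.sum_range_succ (n := 2),
          Finset.sum_range_succ (n := 1), Finset.sum_range_succ (n := 0)]
        have h1 := pgm_key K 1
        have h2 := pgm_pascal K 1
        simp only [Nat.choose_one_right] at h1 h2 ⊢
        simp [Finset.sum_range_succ]
        push_cast at h1 h2
        linear_combination ((K:ℤ)+1) * h2 + 2 * h1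
      · -- m ≥ 1
        simp only [Nat.succ_ne_zero, if_false, Nat.add_sub_cancel]
        rw [show m+1+1+2 = (m+3)+1 by ring, Finset.sum_range_succ (n := m+3),
          show m+3 = (m+2)+1 from rfl,
          Finset.sum_range_succ (f := fun i => ((K+1).choose i : ℤ)) (n := m+1)]
        have h1 := pgm_key K (m + 2)
        have h2 := pgm_key K m
        have h3 := pgm_pascal K (m + 2)
        have h4 := pgm_pascal K m
        push_cast
        push_cast at h1 h2 h3 h4
        linear_combination ((K:ℤ)+1) * h3 + 2 * h1 - ((K:ℤ)+1) * h4 - 2 * h2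

/-- Odd case sum. -/
lemma pgm_sum_odd (q : ℕ) :
    (∑ i ∈ Finset.range (q + 2), (2 * q + 1).choose i)
      + ∑ i ∈ Finset.range q, (2 * q + 1).choose i = 2 ^ (2 * q + 1) := by
  have h := Nat.sum_range_choose (2 * q + 1)
  rw [show 2*q+1+1 = (q+2)+q by ring, Finset.sum_range_add] at h
  have e1 : ∑ i ∈ Finset.range q, (2*q+1).choose (q+2+i)
      = ∑ i ∈ Finset.range q, (2*q+1).choose i := by
    rw [← Finset.sum_range_reflect (fun j => (2*q+1).choose j) q]
    refine Finset.sum_congr rfl (fun i hi => ?_)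
    have hi' := Finset.mem_range.mp hi
    rw [show q+2+i = (2*q+1) - (q-1-i) by omega, Nat.choose_symm (by omega)]
  rw [e1] at h
  exact h

/-- Even case sum. -/
lemma pgm_sum_even (p : ℕ) :
    (∑ i ∈ Finset.range (p + 2), (2 * p + 2).choose i)
      + (∑ i ∈ Finset.range p, (2 * p + 2).choose i)
      + (2 * p + 2).choose (p + 2) = 2 ^ (2 * p + 2) := by
  have h := Nat.sum_range_choose (2 * p + 2)
  rw [show 2*p+2+1 = (p+3)+p by ring, Finset.sum_range_add,
    show p+3 = (p+2)+1 from rfl, Finset.sum_range_succ] at h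
  have e1 : ∑ i ∈ Finset.range p, (2*p+2).choose (p+2+1+i)
      = ∑ i ∈ Finset.range p, (2*p+2).choose i := by
    rw [← Finset.sum_range_reflect (fun j => (2*p+2).choose j) p]
    refine Finset.sum_congr rfl (fun i hi => ?_)
    have hi' := Finset.mem_range.mp hi
    rw [show p+2+1+i = (2*p+2) - (p-1-i) by omega, Nat.choose_symm (by omega)]
  rw [e1] at h
  linarith

theorem pgm_trace_sum (k : ℕ) (hk : 1 ≤ k) :
    ∑ j ∈ Finset.range ((k - 1) / 2 + 1),
        ((k : ℤ) - 2 * (j : ℤ)) *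
          ((k.choose (j + 1) : ℤ) - (if j = 0 then 0 else (k.choose (j - 1) : ℤ)))
      = 2 ^ (k + 1) - (k : ℤ) - 2 := by
  rcases Nat.lt_or_ge k 3 with hk3 | hk3
  · interval_cases k
    · norm_num [Finset.sum_range_succ]
    · norm_num [Finset.sum_range_succ]
  · have H := pgm_partial k hk ((k - 1) / 2)
    rw [H]
    rcases Nat.even_or_odd k with ⟨q, hq⟩ | ⟨q, hq⟩
    · -- k = 2(p+1)
      obtain ⟨p, rfl⟩ : ∃ p, q = p + 1 := ⟨q - 1, by omega⟩
      have hm : (k - 1) / 2 = p := by omega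
      have hk1 : k - 1 = 2 * p + 1 := by omega
      have hkv : k = 2 * p + 2 := by omega
      rw [hm, hk1, hkv]
      simp only [if_neg (show ¬ p = 0 by omega)]
      have h1 := pgm_key (2 * p + 1) (p + 1)
      rw [show 2*p+1+1 = 2*p+2 by ring, show p+1+1 = p+2 by ring] at h1
      have h2 : ((2:ℤ)*p + 2) * ((2*p+1).choose (p-1) : ℤ)
          = (p : ℤ) * ((2*p+2).choose p : ℤ) := by
        obtain ⟨p', rfl⟩ : ∃ p', p = p' + 1 := ⟨p - 1, by omega⟩
        have h := pgm_key (2*p'+3) p'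
        rw [show 2*(p'+1)+1 = 2*p'+3 by ring, show p'+1-1 = p' by omega,
          show 2*(p'+1)+2 = 2*p'+3+1 by ring]
        push_cast at h ⊢
        linear_combination h
      have h3 : ((2*p+2).choose (p+2) : ℤ) = ((2*p+2).choose p : ℤ) := by
        have h := Nat.choose_symm (show p+2 ≤ 2*p+2 by omega)
        rw [show 2*p+2-(p+2) = p by omega] at h
        exact_mod_cast h.symm
      have h4' := congrArg (Nat.cast : ℕ → ℤ) (pgm_sum_even p)
      push_cast at h4' h1 ⊢
      linear_combination h1 - h2 + 2 * h4' + (p:ℤ) * h3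
    · -- k = 2q+1
      have hq1 : 1 ≤ q := by omega
      have hm : (k - 1) / 2 = q := by omega
      have hk1 : k - 1 = 2 * q := by omega
      rw [hm, hk1, hq]
      simp only [if_neg (show ¬ q = 0 by omega)]
      have h1' : ((2*q).choose (q+1) : ℤ) = ((2*q).choose (q-1) : ℤ) := by
        have h := Nat.choose_symm (show q+1 ≤ 2*q by omega)
        rw [show 2*q-(q+1) = q-1 by omega] at h
        exact_mod_cast h.symm
      have h2' := congrArg (Nat.cast : ℕ → ℤ) (pgm_sum_odd q)
      push_cast at h2' ⊢
      linear_combination (2*(q:ℤ)+1) * h1' + 2 * h2'
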